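/- Fix a positive integer k, let ξ^{(k)} be the unique positive real root of H^{(k)}(x) = x^k − x^{k−1} + x − 2, and let g_n be the maximal real root of G_n^{(k)}. Then g_n → ξ^{(k)} as n → ∞. -/
import Mathlib
open Filter

section aux

variable {k : ℕ} {G : ℕ → ℝ → ℝ}

lemma Gcont (hG0 : ∀ x, G 0 x = -1) (hG1 : ∀ x, G 1 x = x - 1)
    (hG : ∀ n, 2 ≤ n → ∀ x, G n x = x ^ k * G (n - 1) x + G (n - 2) x) :
    ∀ n, Continuous (G n) := by
  have key : ∀ n, Continuous (G n) ∧ Continuous (G (n+1)) := by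
    intro n
    induction n with
    | zero =>
      constructor
      · have h : G 0 = fun _ : ℝ => (-1 : ℝ) := funext hG0
        rw [h]; exact continuous_const
      · have h : G 1 = fun x : ℝ => x - 1 := funext hG1
        rw [h]; exact continuous_id.sub continuous_const
    | succ n ih =>
      refine ⟨ih.2, ?_⟩
      have h : G (n+2) = fun x : ℝ => x ^ k * G (n+1) x + G n x := by
        funext x
        exact hG (n+2) (by omega) x
      rw [h]
      exact ((continuous_pow k).mul ih.2).add ih.1
  exact fun n => (key n).1

lemma Gprop (hG : ∀ n, 2 ≤ n → ∀ x, G n x = x ^ k * G (n - 1) x + G (n - 2) x)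
    (x : ℝ) (hx : 0 < x) (N : ℕ) (h1 : 0 < G N x) (h2 : 0 < G (N+1) x) :
    ∀ n, N ≤ n → 0 < G n x := by
  have key : ∀ m, 0 < G (N+m) x ∧ 0 < G (N+m+1) x := by
    intro m
    induction m with
    | zero => exact ⟨h1, h2⟩
    | succ m ih =>
      refine ⟨ih.2, ?_⟩
      have hr := hG (N+m+2) (by omega) x
      have : N + (m+1) + 1 = N+m+2 := by omega
      rw [this, hr]
      exact add_pos (mul_pos (pow_pos hx k) ih.2) ih.1
  intro n hn
  have := (key (n - N)).1
  rwa [Nat.add_sub_cancel' hn] at this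

lemma Gform (hG0 : ∀ x, G 0 x = -1) (hG1 : ∀ x, G 1 x = x - 1)
    (hG : ∀ n, 2 ≤ n → ∀ x, G n x = x ^ k * G (n - 1) x + G (n - 2) x)
    (x α β A B : ℝ) (hα : α ^ 2 = x ^ k * α + 1) (hβ : β ^ 2 = x ^ k * β + 1)
    (h0 : A + B = -1) (h1 : A * α + B * β = x - 1) :
    ∀ n, G n x = A * α ^ n + B * β ^ n := by
  have key : ∀ n, G n x = A * α ^ n + B * β ^ n ∧
      G (n+1) x = A * α ^ (n+1) + B * β ^ (n+1) := by
    intro n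
    induction n with
    | zero =>
      constructor
      · rw [hG0]; simpa using h0.symm
      · rw [hG1]; simpa using h1.symm
    | succ n ih =>
      refine ⟨ih.2, ?_⟩
      have hr := hG (n+2) (by omega) x
      rw [show n+2-1 = n+1 from rfl, show n+2-2 = n from rfl] at hr
      rw [hr, ih.1, ih.2]
      linear_combination (-(A * α ^ n)) * hα + (-(B * β ^ n)) * hβ
  exact fun n => (key n).1

set_option maxHeartbeats 1000000 in
lemma Gev (hk : 1 ≤ k) (hG0 : ∀ x, G 0 x = -1) (hG1 : ∀ x, G 1 x = x - 1)
    (hG : ∀ n, 2 ≤ n → ∀ x, G n x = x ^ k * G (n - 1) x + G (n - 2) x)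
    (x : ℝ) (hx : 0 < x) :
    (0 < x * (x ^ k - x ^ (k-1) + x - 2) → Tendsto (fun n => G n x) atTop atTop) ∧
    (x * (x ^ k - x ^ (k-1) + x - 2) < 0 → Tendsto (fun n => G n x) atTop atBot) := by
  have ha : 0 < x ^ k := pow_pos hx k
  set s : ℝ := Real.sqrt ((x ^ k) ^ 2 + 4) with hs_def
  have hs2 : s ^ 2 = (x ^ k) ^ 2 + 4 := Real.sq_sqrt (by positivity)
  have hs0 : 0 ≤ s := Real.sqrt_nonneg _
  have hs_gt : 2 < s := by nlinarith [mul_pos ha ha]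
  have hsa : x ^ k < s := by nlinarith
  have hsa2 : s < x ^ k + 2 := by nlinarith
  have hαeq : ((x ^ k + s)/2) ^ 2 = x ^ k * ((x ^ k + s)/2) + 1 := by
    linear_combination hs2/4
  have hβeq : ((x ^ k - s)/2) ^ 2 = x ^ k * ((x ^ k - s)/2) + 1 := by
    linear_combination hs2/4
  set A : ℝ := (x - 1 + (x ^ k - s)/2)/s with hA_def
  set B : ℝ := -1 - A with hB_def
  have h0 : A + B = -1 := by rw [hB_def]; ring
  have hs_ne : s ≠ 0 := by linarith
  have h1 : A * ((x ^ k + s)/2) + B * ((x ^ k - s)/2) = x - 1 := by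
    rw [hB_def, hA_def]; field_simp; ring
  have hform := Gform hG0 hG1 hG x ((x ^ k + s)/2) ((x ^ k - s)/2) A B hαeq hβeq h0 h1
  have hα1 : 1 < (x ^ k + s)/2 := by linarith
  have hβabs : |(x ^ k - s)/2| < 1 := abs_lt.2 ⟨by linarith, by linarith⟩
  have hpk : x ^ (k-1) * x = x ^ k := by
    rw [← pow_succ]; congr 1; omega
  have tβ : Tendsto (fun n : ℕ => B * ((x ^ k - s)/2) ^ n) atTop (nhds 0) := by
    have h := tendsto_pow_atTop_nhds_zero_of_abs_lt_one hβabs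
    simpa using h.const_mul B
  constructor
  · intro hxH
    have hxH' : 1 < x ^ k * (x - 1) + (x - 1) ^ 2 := by nlinarith [hpk]
    have hx1 : 1 < x := by
      by_contra hcon
      push_neg at hcon
      nlinarith [mul_nonneg ha.le (sub_nonneg.2 hcon), mul_nonneg hx.le (sub_nonneg.2 hcon)]
    have hkey : 0 < (2*(x-1) + x ^ k - s) * (2*(x-1) + x ^ k + s) := by nlinarith [hs2]
    have hsumpos : 0 < 2*(x-1) + x ^ k + s := by linarith
    have hdiff : 0 < 2*(x-1) + x ^ k - s := by nlinarith [hkey, hsumpos]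
    have hApos : 0 < A := by
      rw [hA_def]
      apply div_pos (by linarith) (by linarith)
    have tα : Tendsto (fun n : ℕ => A * ((x ^ k + s)/2) ^ n) atTop atTop :=
      (tendsto_pow_atTop_atTop_of_one_lt hα1).const_mul_atTop hApos
    exact (tα.atTop_add tβ).congr fun n => (hform n).symm
  · intro hxH
    have hxH' : x ^ k * (x - 1) + (x - 1) ^ 2 < 1 := by nlinarith [hpk]
    have hdiff : 2*(x-1) + x ^ k - s < 0 := by
      rcases le_or_gt (2*(x-1) + x ^ k) 0 with h | h
      · linarith
      · nlinarith [hs2]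
    have hAneg : A < 0 := by
      rw [hA_def]
      apply div_neg_of_neg_of_pos (by linarith) (by linarith)
    have tα : Tendsto (fun n : ℕ => A * ((x ^ k + s)/2) ^ n) atTop atBot :=
      (tendsto_pow_atTop_atTop_of_one_lt hα1).const_mul_atTop_of_neg hAneg
    exact (tα.atBot_add tβ).congr fun n => (hform n).symm

end aux

theorem g_tendsto_xi (k : ℕ) (hk : 1 ≤ k) (G : ℕ → ℝ → ℝ)
    (hG0 : ∀ x, G 0 x = -1) (hG1 : ∀ x, G 1 x = x - 1)
    (hG : ∀ n, 2 ≤ n → ∀ x, G n x = x ^ k * G (n - 1) x + G (n - 2) x)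
    (ξ : ℝ) (hξpos : 0 < ξ) (hξroot : ξ ^ k - ξ ^ (k - 1) + ξ - 2 = 0)
    (hξuniq : ∀ x : ℝ, 0 < x → x ^ k - x ^ (k - 1) + x - 2 = 0 → x = ξ)
    (g : ℕ → ℝ)
    (hg : ∀ n, 1 ≤ n → G n (g n) = 0 ∧ ∀ x : ℝ, G n x = 0 → x ≤ g n) :
    Filter.Tendsto g Filter.atTop (nhds ξ) := by
  have hcont := Gcont hG0 hG1 hG
  have Hcont : Continuous (fun x : ℝ => x ^ k - x ^ (k-1) + x - 2) :=
    (((continuous_pow k).sub (continuous_pow (k-1))).add continuous_id).sub continuous_const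
  have hξ1 : 1 < ξ := by
    by_contra hcon
    push_neg at hcon
    have h1 : ξ ^ k ≤ ξ ^ (k-1) := pow_le_pow_of_le_one hξpos.le hcon (Nat.sub_le k 1)
    linarith
  have Hneg : ∀ y : ℝ, 0 < y → y < ξ → y ^ k - y ^ (k-1) + y - 2 < 0 := by
    intro y hy0 hyξ
    by_contra hcon
    push_neg at hcon
    rcases eq_or_lt_of_le hcon with heq | hlt
    · exact absurd (hξuniq y hy0 heq.symm) (ne_of_lt hyξ)
    · have hz0 : (0:ℝ) < min (y/2) (1/2) := lt_min (by linarith) (by norm_num)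
      have hz1 : min (y/2) (1/2) ≤ 1/2 := min_le_right _ _
      have hzy : min (y/2) (1/2) ≤ y := le_trans (min_le_left _ _) (by linarith)
      have hZ : (min (y/2) (1/2)) ^ k - (min (y/2) (1/2)) ^ (k-1) + (min (y/2) (1/2)) - 2 < 0 := by
        have h1 : (min (y/2) (1/2)) ^ k ≤ min (y/2) (1/2) :=
          pow_le_of_le_one hz0.le (by linarith) (by omega)
        have h2 : (0:ℝ) ≤ (min (y/2) (1/2)) ^ (k-1) := pow_nonneg hz0.le _
        linarith
      obtain ⟨c, hcmem, hc0⟩ :=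
        intermediate_value_Icc hzy Hcont.continuousOn (Set.mem_Icc.2 ⟨hZ.le, hlt.le⟩)
      have hcξ : c = ξ := hξuniq c (lt_of_lt_of_le hz0 hcmem.1) hc0
      have hcy : c ≤ y := hcmem.2
      rw [hcξ] at hcy
      linarith
  have Hpos : ∀ y : ℝ, ξ < y → 0 < y ^ k - y ^ (k-1) + y - 2 := by
    intro y hyξ
    have hy0 : 0 < y := lt_trans hξpos hyξ
    by_contra hcon
    push_neg at hcon
    rcases eq_or_lt_of_le hcon with heq | hlt
    · exact absurd (hξuniq y hy0 heq) (ne_of_gt hyξ)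
    · have hM3 : (3:ℝ) ≤ max y 3 := le_max_right _ _
      have hMy : y ≤ max y 3 := le_max_left _ _
      have hpk : (max y 3) ^ (k-1) * (max y 3) = (max y 3) ^ k := by
        rw [← pow_succ]; congr 1; omega
      have h1 : 0 ≤ (max y 3) ^ (k-1) * ((max y 3) - 1) :=
        mul_nonneg (pow_nonneg (by linarith) _) (by linarith)
      have hHM : 0 < (max y 3) ^ k - (max y 3) ^ (k-1) + (max y 3) - 2 := by
        nlinarith [h1, hpk]
      obtain ⟨c, hcmem, hc0⟩ :=
        intermediate_value_Icc hMy Hcont.continuousOn (Set.mem_Icc.2 ⟨hlt.le, hHM.le⟩)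
      have hcξ : c = ξ := hξuniq c (lt_of_lt_of_le hy0 hcmem.1) hc0
      have hcy : y ≤ c := hcmem.1
      rw [hcξ] at hcy
      linarith
  have hξ2 : ξ < 2 := by
    by_contra hcon
    push_neg at hcon
    have h2k : (2:ℝ) ^ k = 2 * 2 ^ (k-1) := by
      rw [← pow_succ']; congr 1; omega
    have hp : (0:ℝ) < 2 ^ (k-1) := pow_pos (by norm_num) _
    rcases eq_or_lt_of_le hcon with heq | hlt
    · rw [← heq] at hξroot; linarith
    · have := Hneg 2 (by norm_num) hlt
      linarith
  -- positivity of G n 2 for n ≥ 2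
  have hG22 : 0 < G 2 2 := by
    have h := hG 2 le_rfl 2
    rw [show 2-1 = 1 from rfl, show 2-2 = 0 from rfl, hG1, hG0] at h
    have h2k : (1:ℝ) < 2 ^ k := one_lt_pow₀ (by norm_num) (by omega)
    rw [h]; linarith
  have hG32 : 0 < G 3 2 := by
    have h := hG 3 (by omega) 2
    rw [show 3-1 = 2 from rfl, show 3-2 = 1 from rfl, hG1] at h
    rw [h]
    have := pow_pos (show (0:ℝ) < 2 by norm_num) k
    nlinarith [hG22]
  have hGn2 : ∀ n, 2 ≤ n → 0 < G n 2 :=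
    Gprop hG 2 (by norm_num) 2 hG22 hG32
  rw [tendsto_order]
  constructor
  · -- lower bound
    intro a ha
    have hx₁ξ : max a ((1+ξ)/2) < ξ := max_lt ha (by linarith)
    have hx₁1 : 1 < max a ((1+ξ)/2) := lt_of_lt_of_le (by linarith) (le_max_right _ _)
    have hx₁pos : 0 < max a ((1+ξ)/2) := by linarith
    have hHx₁ : (max a ((1+ξ)/2)) ^ k - (max a ((1+ξ)/2)) ^ (k-1) + (max a ((1+ξ)/2)) - 2 < 0 :=
      Hneg _ hx₁pos hx₁ξ
    have hev := ((Gev hk hG0 hG1 hG (max a ((1+ξ)/2)) hx₁pos).2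
        (mul_neg_of_pos_of_neg hx₁pos hHx₁)).eventually_lt_atBot 0
    have hx₁le2 : max a ((1+ξ)/2) ≤ 2 := le_of_lt (max_lt (by linarith) (by linarith))
    filter_upwards [hev, eventually_ge_atTop 2] with n hneg hn2
    have hpos2 : 0 < G n 2 := hGn2 n hn2
    obtain ⟨c, hcmem, hc0⟩ :=
      intermediate_value_Icc hx₁le2 (hcont n).continuousOn (Set.mem_Icc.2 ⟨hneg.le, hpos2.le⟩)
    have hgc : c ≤ g n := (hg n (by omega)).2 c hc0
    have hx₁c : max a ((1+ξ)/2) < c := by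
      rcases eq_or_lt_of_le hcmem.1 with heq | h
      · rw [← heq] at hc0; linarith
      · exact h
    calc a ≤ max a ((1+ξ)/2) := le_max_left _ _
      _ < c := hx₁c
      _ ≤ g n := hgc
  · -- upper bound
    intro b hb
    set x₀ : ℝ := min b ((ξ+2)/2) with hx₀_def
    have hx₀ξ : ξ < x₀ := lt_min hb (by linarith)
    have hx₀2 : x₀ < 2 := lt_of_le_of_lt (min_le_right _ _) (by linarith)
    have hx₀1 : 1 < x₀ := lt_trans hξ1 hx₀ξ
    have hUopen : ∀ N : ℕ, IsOpen {x : ℝ | 0 < G N x ∧ 0 < G (N+1) x} := fun N =>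
      (isOpen_lt continuous_const (hcont N)).inter (isOpen_lt continuous_const (hcont (N+1)))
    have hcover : Set.Icc x₀ 2 ⊆ ⋃ N : ℕ, {x : ℝ | 0 < G N x ∧ 0 < G (N+1) x} := by
      intro x hx
      have hx1 : 1 < x := lt_of_lt_of_le hx₀1 hx.1
      have hHx : 0 < x ^ k - x ^ (k-1) + x - 2 := Hpos x (lt_of_lt_of_le hx₀ξ hx.1)
      have hev := ((Gev hk hG0 hG1 hG x (by linarith)).1
          (mul_pos (by linarith) hHx)).eventually_gt_atTop 0
      obtain ⟨N, hN⟩ := eventually_atTop.1 hev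
      exact Set.mem_iUnion.2 ⟨N, hN N le_rfl, hN (N+1) (by omega)⟩
    obtain ⟨t, ht⟩ := isCompact_Icc.elim_finite_subcover _ hUopen hcover
    filter_upwards [eventually_ge_atTop (t.sup id + 3)] with n hn
    have hn1 : 1 ≤ n := by omega
    have hpos : ∀ x : ℝ, x₀ ≤ x → 0 < G n x := by
      intro x hxx
      have hx0 : 0 < x := by linarith
      rcases le_or_gt x 2 with h2 | h2
      · obtain ⟨N, hNt, hNx⟩ := Set.mem_iUnion₂.1 (ht ⟨hxx, h2⟩)
        have hNle : N ≤ t.sup id := Finset.le_sup (f := id) hNt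
        exact Gprop hG x hx0 N hNx.1 hNx.2 n (by omega)
      · -- x > 2
        have hxk2 : (2:ℝ) ≤ x ^ k := le_trans h2.le (le_self_pow₀ (by linarith) (by omega))
        have hG2x : 0 < G 2 x := by
          have h := hG 2 le_rfl x
          rw [show 2-1 = 1 from rfl, show 2-2 = 0 from rfl, hG1, hG0] at h
          rw [h]
          nlinarith [hxk2]
        have hG3x : 0 < G 3 x := by
          have h := hG 3 (by omega) x
          rw [show 3-1 = 2 from rfl, show 3-2 = 1 from rfl, hG1] at h
          rw [h]
          have := pow_pos hx0 k
          nlinarith [hG2x]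
        exact Gprop hG x hx0 2 hG2x hG3x n (by omega)
    have hgn : g n < x₀ := by
      by_contra hcon
      push_neg at hcon
      exact absurd (hg n hn1).1 (ne_of_gt (hpos _ hcon))
    exact lt_of_lt_of_le hgn (min_le_left _ _)
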